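/- Let T be a finite tree with n ≥ 2 vertices and bipartition (X, Y). If T admits a set-ordered graceful labelling with respect to (X, Y), then there exists an injective function g : V(T) → {1, 2, …, 2n} such that the residues (g(u) + g(v)) mod 2n, over all n − 1 edges uv of T, are pairwise distinct and each of these residues is an odd number. -/
import Mathlib


/-- The induced edge label `|f u - f v|` for a vertex labelling `f`. -/
def elabel {V : Type*} (f : V → ℕ) (u v : V) : ℕ :=
  max (f u) (f v) - min (f u) (f v)

/-- `(X, Y)` is a bipartition of the graph `G`: the two parts cover all vertices,
are disjoint, and every edge joins a vertex of `X` to a vertex of `Y`. -/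
def IsBipartitionOf {V : Type*} (G : SimpleGraph V) (X Y : Finset V) : Prop :=
  (∀ v : V, v ∈ X ∨ v ∈ Y) ∧ (∀ v : V, ¬(v ∈ X ∧ v ∈ Y)) ∧
    ∀ ⦃u v : V⦄, G.Adj u v → (u ∈ X ∧ v ∈ Y) ∨ (u ∈ Y ∧ v ∈ X)

/-- `f` is a set-ordered graceful labelling of `G` (with `q` edges) with respect to the
bipartition `(X, Y)`: `f` is injective into `{0,…,q}`, the induced edge labels
`|f u - f v|` are pairwise distinct and form exactly `{1,…,q}`, and every label on `X`
is smaller than every label on `Y`. -/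
def IsSetOrderedGraceful {V : Type*} (G : SimpleGraph V) (X Y : Finset V) (q : ℕ)
    (f : V → ℕ) : Prop :=
  Function.Injective f ∧ (∀ v : V, f v ≤ q) ∧
    (∀ u v u' v' : V, G.Adj u v → G.Adj u' v' →
      elabel f u v = elabel f u' v' → s(u, v) = s(u', v')) ∧
    (∀ u v : V, G.Adj u v → 1 ≤ elabel f u v ∧ elabel f u v ≤ q) ∧
    (∀ m : ℕ, 1 ≤ m → m ≤ q → ∃ u v : V, G.Adj u v ∧ elabel f u v = m) ∧
    (∀ x ∈ X, ∀ y ∈ Y, f x < f y)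

/-- `f` is a set-ordered odd-graceful labelling of `G` (with `q` edges) with respect to
the bipartition `(X, Y)`: `f` is injective into `{0,…,2q-1}`, the induced edge labels
`|f u - f v|` are pairwise distinct and form exactly the odd numbers `{1,3,…,2q-1}`,
and every label on `X` is smaller than every label on `Y`. -/
def IsSetOrderedOddGraceful {V : Type*} (G : SimpleGraph V) (X Y : Finset V) (q : ℕ)
    (f : V → ℕ) : Prop :=
  Function.Injective f ∧ (∀ v : V, f v ≤ 2 * q - 1) ∧
    (∀ u v u' v' : V, G.Adj u v → G.Adj u' v' →
      elabel f u v = elabel f u' v' → s(u, v) = s(u', v')) ∧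
    (∀ u v : V, G.Adj u v → Odd (elabel f u v) ∧ elabel f u v ≤ 2 * q - 1) ∧
    (∀ m : ℕ, Odd m → m ≤ 2 * q - 1 → ∃ u v : V, G.Adj u v ∧ elabel f u v = m) ∧
    (∀ x ∈ X, ∀ y ∈ Y, f x < f y)

/-- If a finite tree with `n ≥ 2` vertices admits a set-ordered graceful labelling with
respect to a bipartition `(X, Y)`, then there is an injective `g : V(T) → {1,…,2n}`
such that the residues `(g u + g v) mod 2n`, over the edges, are pairwise distinct and
each residue is odd. -/
theorem setOrderedGraceful_oddElegant {V : Type*} [Fintype V] [DecidableEq V]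
    (G : SimpleGraph V) (hT : G.IsTree)
    (n : ℕ) (hn : Fintype.card V = n) (hn2 : 2 ≤ n)
    (X Y : Finset V) (hbip : IsBipartitionOf G X Y)
    (f : V → ℕ) (hf : IsSetOrderedGraceful G X Y (n - 1) f) :
    ∃ g : V → ℕ,
      Function.Injective g ∧ (∀ v : V, 1 ≤ g v ∧ g v ≤ 2 * n) ∧
      (∀ u v u' v' : V, G.Adj u v → G.Adj u' v' →
        (g u + g v) % (2 * n) = (g u' + g v') % (2 * n) → s(u, v) = s(u', v')) ∧
      (∀ u v : V, G.Adj u v → Odd ((g u + g v) % (2 * n))) := by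
  obtain ⟨hinj, hle, hdist, hbound, hsurj, hXY⟩ := hf
  obtain ⟨hcov, hdisj, hadj⟩ := hbip
  classical
  have key : ∀ u v : V, G.Adj u v →
      ((if u ∈ X then 2 * f u + 1 else 2 * n - 2 * f u) +
        (if v ∈ X then 2 * f v + 1 else 2 * n - 2 * f v)) % (2 * n)
        = 2 * n + 1 - 2 * (elabel f u v)
      ∧ 1 ≤ elabel f u v ∧ elabel f u v ≤ n - 1 := by
    intro u v huv
    have h1 := hle u; have h2 := hle v
    have hb := hbound u v huv
    rcases hadj huv with ⟨hu, hv⟩ | ⟨hu, hv⟩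
    · have hvx : v ∉ X := fun h => hdisj v ⟨h, hv⟩
      have hlt : f u < f v := hXY u hu v hv
      have he : elabel f u v = f v - f u := by unfold elabel; omega
      simp only [hu, hvx, if_true, if_false]
      have hsum : (2 * f u + 1) + (2 * n - 2 * f v) = 2 * n + 1 - 2 * (elabel f u v) := by
        omega
      rw [hsum, Nat.mod_eq_of_lt (by omega)]
      omega
    · have hux : u ∉ X := fun h => hdisj u ⟨h, hu⟩
      have hlt : f v < f u := hXY v hv u hu
      have he : elabel f u v = f u - f v := by unfold elabel; omega
      simp only [hv, hux, if_true, if_false]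
      have hsum : (2 * n - 2 * f u) + (2 * f v + 1) = 2 * n + 1 - 2 * (elabel f u v) := by
        omega
      rw [hsum, Nat.mod_eq_of_lt (by omega)]
      omega
  refine ⟨fun v => if v ∈ X then 2 * f v + 1 else 2 * n - 2 * f v, ?_, ?_, ?_, ?_⟩
  · intro a b hab
    simp only at hab
    have h1 := hle a; have h2 := hle b
    apply hinj
    by_cases ha : a ∈ X <;> by_cases hb' : b ∈ X <;>
      simp only [ha, hb', if_true, if_false] at hab <;> omega
  · intro v
    have h1 := hle v
    by_cases hv : v ∈ X <;> simp only [hv, if_true, if_false] <;> omega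
  · intro u v u' v' h h' heq
    simp only at heq
    obtain ⟨e1, e2, e3⟩ := key u v h
    obtain ⟨e1', e2', e3'⟩ := key u' v' h'
    exact hdist u v u' v' h h' (by omega)
  · intro u v h
    obtain ⟨e1, e2, e3⟩ := key u v h
    simp only
    rw [e1]
    exact ⟨n - elabel f u v, by omega⟩
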